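/- Let n ≥ 2, let Ω ⊂ ℝⁿ be a bounded open set, x₀ ∈ Ω and τ > 0 with the open ball B(x₀, τ) contained in Ω, and let ϱ > 0. Define w_τ^ϱ(x, y) := e^{−y/2}·ω_τ^ϱ(x) for (x, y) ∈ Ω × (0, +∞), and set g := 2·ω_n·τ^{n−2}·(1 − 2^{−n}). Then 2g·ϱ² ≤ ∫_{Ω×(0,+∞)} |∇w_τ^ϱ(x, y)|² dx dy ≤ (2g + |Ω|/4)·ϱ², where |Ω| is the Lebesgue measure of Ω. In particular, if γ > 0 satisfies g·ϱ² > γ², then (1/2)∫_{Ω×(0,+∞)} |∇w_τ^ϱ|² dx dy > γ². -/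

import Mathlib

open Filter Topology MeasureTheory

/-- The truncated cone `ω_τ^ϱ` centered at `x₀`. -/
noncomputable def truncatedCone {n : ℕ} (x₀ : EuclideanSpace ℝ (Fin n)) (τ ϱ : ℝ) :
    EuclideanSpace ℝ (Fin n) → ℝ := fun x =>
  if dist x x₀ ≤ τ / 2 then ϱ
  else if dist x x₀ < τ then (2 * ϱ / τ) * (τ - dist x x₀)
  else 0

/-- `ω_n = π^{n/2}/Γ(1 + n/2)`, the Lebesgue measure of the unit ball of `ℝⁿ`. -/
noncomputable def unitBallVolume (n : ℕ) : ℝ :=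
  Real.pi ^ ((n : ℝ) / 2) / Real.Gamma (1 + (n : ℝ) / 2)

/-- Projection of a point of `ℝ^{n+1}` onto its first `n` coordinates. -/
noncomputable def projFirst {n : ℕ} (p : EuclideanSpace ℝ (Fin (n + 1))) :
    EuclideanSpace ℝ (Fin n) := WithLp.toLp 2 (fun i : Fin n => p i.castSucc)

/-- The last coordinate of a point of `ℝ^{n+1}`. -/
noncomputable def lastCoord {n : ℕ} (p : EuclideanSpace ℝ (Fin (n + 1))) : ℝ :=
  p (Fin.last n)

/-- The function `w_τ^ϱ(x, y) = e^{−y/2}·ω_τ^ϱ(x)` on `ℝⁿ × (0, ∞) ⊆ ℝ^{n+1}`. -/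
noncomputable def cylinderFun {n : ℕ} (x₀ : EuclideanSpace ℝ (Fin n)) (τ ϱ : ℝ) :
    EuclideanSpace ℝ (Fin (n + 1)) → ℝ := fun p =>
  Real.exp (-(lastCoord p) / 2) * truncatedCone x₀ τ ϱ (projFirst p)

/-! ### Auxiliary material -/

noncomputable def projCLM (n : ℕ) : EuclideanSpace ℝ (Fin (n+1)) →L[ℝ] EuclideanSpace ℝ (Fin n) :=
  LinearMap.toContinuousLinearMap
    { toFun := projFirst
      map_add' := fun _ _ => rfl
      map_smul' := fun _ _ => rfl }

noncomputable def lastCLM (n : ℕ) : EuclideanSpace ℝ (Fin (n+1)) →L[ℝ] ℝ :=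
  EuclideanSpace.proj (Fin.last n)

lemma projCLM_apply {n : ℕ} (p : EuclideanSpace ℝ (Fin (n+1))) : projCLM n p = projFirst p := rfl
lemma lastCLM_apply {n : ℕ} (p : EuclideanSpace ℝ (Fin (n+1))) : lastCLM n p = lastCoord p := rfl

noncomputable def appendVec {n : ℕ} (w : EuclideanSpace ℝ (Fin n)) (a : ℝ) :
    EuclideanSpace ℝ (Fin (n+1)) := WithLp.toLp 2 (fun j => Fin.lastCases (motive := fun _ => ℝ) a (fun i => w i) j)

lemma key_norm {n : ℕ} (L : EuclideanSpace ℝ (Fin (n+1)) →L[ℝ] ℝ)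
    (w : EuclideanSpace ℝ (Fin n)) (a : ℝ)
    (hL : ∀ q, L q = inner ℝ w (projFirst q) + a * lastCoord q) :
    ‖L‖ ^ 2 = ‖w‖ ^ 2 + a ^ 2 := by
  have hv : L = innerSL ℝ (appendVec w a) := by
    ext q
    rw [hL]
    simp only [innerSL_apply_apply, PiLp.inner_apply, RCLike.inner_apply, conj_trivial]
    rw [Fin.sum_univ_castSucc]
    simp [appendVec, projFirst, lastCoord]
    ring
  rw [hv, innerSL_apply_norm]
  have h1 : ‖appendVec w a‖ ^ 2 = ∑ j, (appendVec w a j) ^ 2 := by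
    rw [EuclideanSpace.norm_eq, Real.sq_sqrt (by positivity)]
    simp [sq_abs]
  rw [h1, Fin.sum_univ_castSucc]
  have h2 : ‖w‖ ^ 2 = ∑ i, (w i) ^ 2 := by
    rw [EuclideanSpace.norm_eq, Real.sq_sqrt (by positivity)]
    simp [sq_abs]
  simp [appendVec, h2]

lemma hasFDerivAt_norm' {E : Type*} [NormedAddCommGroup E] [InnerProductSpace ℝ E]
    {z : E} (hz : z ≠ 0) :
    HasFDerivAt (fun w : E => ‖w‖) (innerSL ℝ (‖z‖⁻¹ • z)) z := by
  have h1 : HasFDerivAt (fun w : E => inner ℝ w w : E → ℝ)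
      ((fderivInnerCLM ℝ (z, z)).comp ((ContinuousLinearMap.id ℝ E).prod
        (ContinuousLinearMap.id ℝ E))) z :=
    (hasFDerivAt_id z).inner ℝ (hasFDerivAt_id z)
  have hzz : (inner ℝ z z : ℝ) ≠ 0 := by
    simpa [real_inner_self_eq_norm_sq] using pow_ne_zero 2 (norm_ne_zero_iff.2 hz)
  have h2 := HasDerivAt.comp_hasFDerivAt (f := fun w : E => (inner ℝ w w : ℝ)) z
    (Real.hasDerivAt_sqrt hzz) h1
  have h3 : (fun w : E => Real.sqrt (inner ℝ w w : ℝ)) = fun w : E => ‖w‖ := by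
    ext w; rw [norm_eq_sqrt_real_inner]
  rw [show ((fun x => Real.sqrt x) ∘ fun w : E => (inner ℝ w w : ℝ)) = fun w : E => ‖w‖ from h3] at h2
  refine h2.congr_fderiv (Eq.symm ?_)
  ext q
  simp only [innerSL_apply_apply, ContinuousLinearMap.coe_smul', Pi.smul_apply,
    ContinuousLinearMap.coe_comp', Function.comp_apply, ContinuousLinearMap.prod_apply,
    ContinuousLinearMap.coe_id', id_eq, fderivInnerCLM_apply]
  rw [real_inner_smul_left, real_inner_comm q z]
  rw [← norm_eq_sqrt_real_inner]
  have : ‖z‖ ≠ 0 := norm_ne_zero_iff.2 hz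
  field_simp
  rw [smul_eq_mul]
  field_simp
  ring

/-- The integrand on the base. -/
noncomputable def hFun {n : ℕ} (x₀ : EuclideanSpace ℝ (Fin n)) (τ ϱ : ℝ) :
    EuclideanSpace ℝ (Fin n) → ℝ := fun x =>
  if dist x x₀ < τ / 2 then ϱ ^ 2 / 4
  else if dist x x₀ < τ then (2 * ϱ / τ) ^ 2 * (1 + (τ - dist x x₀) ^ 2 / 4)
  else 0

section regions
variable {n : ℕ} (x₀ : EuclideanSpace ℝ (Fin n)) (τ ϱ : ℝ)

lemma continuous_distProj : Continuous (fun q : EuclideanSpace ℝ (Fin (n+1)) =>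
    dist (projFirst q) x₀) := by
  have : Continuous (fun q : EuclideanSpace ℝ (Fin (n+1)) => projFirst q) := by
    rw [show (fun q : EuclideanSpace ℝ (Fin (n+1)) => projFirst q) = ⇑(projCLM n) from rfl]
    exact (projCLM n).continuous
  exact this.dist continuous_const

lemma exp_half_sq (y : ℝ) : Real.exp (-y / 2) * Real.exp (-y / 2) = Real.exp (-y) := by
  rw [← Real.exp_add]; ring_nf

lemma normsq_region_A {p : EuclideanSpace ℝ (Fin (n+1))}
    (hp : dist (projFirst p) x₀ < τ / 2) :
    ‖fderiv ℝ (cylinderFun x₀ τ ϱ) p‖ ^ 2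
      = hFun x₀ τ ϱ (projFirst p) * Real.exp (-(lastCoord p)) := by
  set y := lastCoord p
  have hU : IsOpen {q : EuclideanSpace ℝ (Fin (n+1)) | dist (projFirst q) x₀ < τ / 2} :=
    isOpen_lt (continuous_distProj x₀) continuous_const
  have heq : cylinderFun x₀ τ ϱ =ᶠ[𝓝 p] fun q => ϱ * Real.exp (-(lastCoord q) / 2) := by
    filter_upwards [hU.mem_nhds hp] with q hq
    simp only [cylinderFun, truncatedCone, Set.mem_setOf_eq] at hq ⊢
    rw [if_pos hq.le]; ring
  set c : ℝ := ϱ * Real.exp (-y / 2) * (-(1/2)) with hc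
  have hd : HasDerivAt (fun t : ℝ => ϱ * Real.exp (-t / 2)) c y := by
    have h0 : HasDerivAt (fun t : ℝ => -t / 2) (-(1 : ℝ)/2) y := by
      simpa using ((hasDerivAt_id y).neg.div_const 2)
    have := (h0.exp).const_mul ϱ
    exact this.congr_deriv (by rw [hc]; ring)
  have hY : HasFDerivAt (fun q : EuclideanSpace ℝ (Fin (n+1)) => lastCoord q) (lastCLM n) p :=
    (lastCLM n).hasFDerivAt
  have hg : HasFDerivAt (fun q : EuclideanSpace ℝ (Fin (n+1)) => ϱ * Real.exp (-(lastCoord q)/2))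
      (c • lastCLM n) p := by have := hd.comp_hasFDerivAt p hY; exact this
  have hfd : fderiv ℝ (cylinderFun x₀ τ ϱ) p = c • lastCLM n := by
    rw [heq.fderiv_eq, hg.fderiv]
  rw [hfd, key_norm _ (0 : EuclideanSpace ℝ (Fin n)) c (fun q => by
    simp [lastCLM_apply])]
  have hx : hFun x₀ τ ϱ (projFirst p) = ϱ ^ 2 / 4 := if_pos hp
  rw [hx, hc]
  simp only [norm_zero]
  rw [show (ϱ * Real.exp (-y / 2) * (-(1/2))) ^ 2
      = ϱ ^ 2/4 * (Real.exp (-y/2) * Real.exp (-y/2)) by ring, exp_half_sq]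
  ring

lemma normsq_region_C {p : EuclideanSpace ℝ (Fin (n+1))} (hτ : 0 < τ)
    (hp : τ < dist (projFirst p) x₀) :
    ‖fderiv ℝ (cylinderFun x₀ τ ϱ) p‖ ^ 2
      = hFun x₀ τ ϱ (projFirst p) * Real.exp (-(lastCoord p)) := by
  have hU : IsOpen {q : EuclideanSpace ℝ (Fin (n+1)) | τ < dist (projFirst q) x₀} :=
    isOpen_lt continuous_const (continuous_distProj x₀)
  have heq : cylinderFun x₀ τ ϱ =ᶠ[𝓝 p] fun _ => (0 : ℝ) := by
    filter_upwards [hU.mem_nhds hp] with q hq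
    simp only [cylinderFun, truncatedCone]
    rw [if_neg (by linarith), if_neg (by linarith)]
    ring
  have hfd : fderiv ℝ (cylinderFun x₀ τ ϱ) p = 0 := by
    rw [heq.fderiv_eq, fderiv_const_apply]
  rw [hfd]
  have hx : hFun x₀ τ ϱ (projFirst p) = 0 := by
    unfold hFun
    rw [if_neg (by linarith), if_neg (by linarith)]
  rw [hx]
  simp

lemma normsq_region_B {p : EuclideanSpace ℝ (Fin (n+1))} (hτ : 0 < τ)
    (hp1 : τ / 2 < dist (projFirst p) x₀) (hp2 : dist (projFirst p) x₀ < τ) :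
    ‖fderiv ℝ (cylinderFun x₀ τ ϱ) p‖ ^ 2
      = hFun x₀ τ ϱ (projFirst p) * Real.exp (-(lastCoord p)) := by
  set y := lastCoord p with hy
  set r := dist (projFirst p) x₀ with hr
  have hU : IsOpen {q : EuclideanSpace ℝ (Fin (n+1)) |
      τ / 2 < dist (projFirst q) x₀ ∧ dist (projFirst q) x₀ < τ} :=
    (isOpen_lt continuous_const (continuous_distProj x₀)).inter
      (isOpen_lt (continuous_distProj x₀) continuous_const)
  have heq : cylinderFun x₀ τ ϱ =ᶠ[𝓝 p] fun q =>
      Real.exp (-(lastCoord q) / 2) * ((2 * ϱ / τ) * (τ - ‖projFirst q - x₀‖)) := by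
    filter_upwards [hU.mem_nhds ⟨hp1, hp2⟩] with q hq
    obtain ⟨h1, h2⟩ := hq
    simp only [cylinderFun, truncatedCone]
    rw [if_neg (by linarith), if_pos h2, dist_eq_norm]
  have hY : HasFDerivAt (fun q : EuclideanSpace ℝ (Fin (n+1)) => lastCoord q) (lastCLM n) p :=
    (lastCLM n).hasFDerivAt
  have hdexp : HasDerivAt (fun t : ℝ => Real.exp (-t / 2)) (Real.exp (-y / 2) * (-1 / 2)) y := by
    have h0 : HasDerivAt (fun t : ℝ => -t / 2) (-(1 : ℝ)/2) y := by
      simpa using ((hasDerivAt_id y).neg.div_const 2)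
    simpa using h0.exp
  have hA : HasFDerivAt (fun q : EuclideanSpace ℝ (Fin (n+1)) => Real.exp (-(lastCoord q) / 2))
      ((Real.exp (-y / 2) * (-1 / 2)) • lastCLM n) p := by have := hdexp.comp_hasFDerivAt p hY; exact this
  set z : EuclideanSpace ℝ (Fin n) := projFirst p - x₀ with hz
  have hzne : z ≠ 0 := by
    rw [hz, sub_ne_zero]
    intro hcontra
    rw [hr, hcontra, dist_self] at hp1
    linarith
  have hznorm : ‖z‖ = r := by rw [hz, ← dist_eq_norm, hr]
  have hP : HasFDerivAt (fun q : EuclideanSpace ℝ (Fin (n+1)) => projFirst q - x₀)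
      (projCLM n) p := by
    have := (projCLM n).hasFDerivAt (x := p)
    exact this.sub_const x₀
  have hN : HasFDerivAt (fun q : EuclideanSpace ℝ (Fin (n+1)) => ‖projFirst q - x₀‖)
      ((innerSL ℝ (‖z‖⁻¹ • z)).comp (projCLM n)) p := (hasFDerivAt_norm' hzne).comp p hP
  have hB : HasFDerivAt (fun q : EuclideanSpace ℝ (Fin (n+1)) =>
      (2 * ϱ / τ) * (τ - ‖projFirst q - x₀‖))
      ((-(2 * ϱ / τ)) • ((innerSL ℝ (‖z‖⁻¹ • z)).comp (projCLM n))) p := by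
    have h1 : HasFDerivAt (fun q : EuclideanSpace ℝ (Fin (n+1)) => τ - ‖projFirst q - x₀‖)
        (-((innerSL ℝ (‖z‖⁻¹ • z)).comp (projCLM n))) p := by
      exact ((hasFDerivAt_const τ p).sub hN).congr_fderiv (zero_sub _)
    have := h1.const_mul (2 * ϱ / τ)
    refine this.congr_fderiv ?_
    rw [smul_neg]
    module
  have hg := hA.mul hB
  have hfd := (heq.fderiv_eq).trans hg.fderiv
  rw [hfd]
  set Bv : ℝ := (2 * ϱ / τ) * (τ - ‖z‖) with hBv
  set E : ℝ := Real.exp (-y / 2) with hE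
  rw [key_norm _ ((E * (-(2 * ϱ / τ))) • (‖z‖⁻¹ • z)) (Bv * (E * (-1 / 2))) (fun q => by
    simp only [ContinuousLinearMap.add_apply, ContinuousLinearMap.coe_smul', Pi.smul_apply,
      ContinuousLinearMap.coe_comp', Function.comp_apply, innerSL_apply_apply,
      lastCLM_apply, projCLM_apply, smul_eq_mul]
    simp only [real_inner_smul_left]
    ring)]
  have hunorm : ‖(‖z‖⁻¹ • z : EuclideanSpace ℝ (Fin n))‖ = 1 := by
    rw [norm_smul, norm_inv, norm_norm, inv_mul_cancel₀ (norm_ne_zero_iff.2 hzne)]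
  rw [norm_smul, hunorm]
  have hx : hFun x₀ τ ϱ (projFirst p) = (2 * ϱ / τ) ^ 2 * (1 + (τ - r) ^ 2 / 4) := by
    unfold hFun
    rw [if_neg (by linarith), if_pos hp2]
  rw [hx, hBv, hznorm]
  have hE2 : E ^ 2 = Real.exp (-y) := by
    rw [hE, sq, exp_half_sq]
  rw [mul_pow, ← hE2]
  rw [show ‖E * (-(2 * ϱ / τ))‖ ^ 2 = E ^ 2 * (2 * ϱ / τ)^2 by
    rw [Real.norm_eq_abs, sq_abs]; ring]
  ring

end regions

noncomputable def splitEquiv (n : ℕ) :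
    EuclideanSpace ℝ (Fin (n + 1)) ≃ᵐ ℝ × EuclideanSpace ℝ (Fin n) :=
  (MeasurableEquiv.toLp 2 (Fin (n+1) → ℝ)).symm.trans
    ((MeasurableEquiv.piFinSuccAbove (fun _ : Fin (n+1) => ℝ) (Fin.last n)).trans
      ((MeasurableEquiv.refl ℝ).prodCongr (MeasurableEquiv.toLp 2 (Fin n → ℝ))))

lemma splitEquiv_apply {n : ℕ} (p : EuclideanSpace ℝ (Fin (n + 1))) :
    splitEquiv n p = (lastCoord p, projFirst p) := by
  refine Prod.ext rfl ?_
  show (MeasurableEquiv.toLp 2 (Fin n → ℝ))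
    (fun j => p ((Fin.last n).succAbove j)) = projFirst p
  ext i
  show p ((Fin.last n).succAbove i) = p i.castSucc
  exact congrArg p (Fin.succAbove_last_apply i)

lemma splitEquiv_measurePreserving (n : ℕ) :
    MeasurePreserving (splitEquiv n) volume volume := by
  have h1 := EuclideanSpace.volume_preserving_symm_measurableEquiv_toLp (Fin (n+1))
  have h2 := volume_preserving_piFinSuccAbove (fun _ : Fin (n+1) => ℝ) (Fin.last n)
  have h3 := (MeasurePreserving.id (volume : Measure ℝ)).prod
    (EuclideanSpace.volume_preserving_symm_measurableEquiv_toLp (Fin n)).symm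
  exact h3.comp (h2.comp h1)

lemma null_preimage {n : ℕ} (N : Set (EuclideanSpace ℝ (Fin n))) (hN : volume N = 0) :
    volume {p : EuclideanSpace ℝ (Fin (n + 1)) | projFirst p ∈ N} = 0 := by
  set M := toMeasurable volume N with hMdef
  have hM : volume M = 0 := by rwa [measure_toMeasurable]
  have hMm : MeasurableSet M := measurableSet_toMeasurable _ _
  have hsub : {p : EuclideanSpace ℝ (Fin (n + 1)) | projFirst p ∈ N}
      ⊆ (splitEquiv n) ⁻¹' ((Set.univ : Set ℝ) ×ˢ M) := by
    intro p hp
    simp only [Set.mem_preimage, splitEquiv_apply, Set.mem_prod, Set.mem_univ, true_and]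
    exact subset_toMeasurable _ _ hp
  refine measure_mono_null hsub ?_
  rw [(splitEquiv_measurePreserving n).measure_preimage
    (MeasurableSet.univ.prod hMm).nullMeasurableSet]
  rw [Measure.volume_eq_prod, Measure.prod_prod, hM, mul_zero]

lemma setIntegral_split {n : ℕ} (Ω : Set (EuclideanSpace ℝ (Fin n)))
    (f : EuclideanSpace ℝ (Fin n) → ℝ) :
    ∫ p in {p : EuclideanSpace ℝ (Fin (n + 1)) | projFirst p ∈ Ω ∧ 0 < lastCoord p},
        Real.exp (-(lastCoord p)) * f (projFirst p) ∂volume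
      = (∫ y in Set.Ioi (0 : ℝ), Real.exp (-y)) * ∫ x in Ω, f x := by
  have hS : {p : EuclideanSpace ℝ (Fin (n + 1)) | projFirst p ∈ Ω ∧ 0 < lastCoord p}
      = (splitEquiv n) ⁻¹' ((Set.Ioi (0 : ℝ)) ×ˢ Ω) := by
    ext p
    simp [splitEquiv_apply, and_comm]
  rw [hS]
  have h1 : ∫ p in (splitEquiv n) ⁻¹' ((Set.Ioi (0 : ℝ)) ×ˢ Ω),
      Real.exp (-(lastCoord p)) * f (projFirst p) ∂volume
      = ∫ p in (splitEquiv n) ⁻¹' ((Set.Ioi (0 : ℝ)) ×ˢ Ω),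
        (fun z : ℝ × EuclideanSpace ℝ (Fin n) => Real.exp (-z.1) * f z.2)
          (splitEquiv n p) ∂volume := by
    refine integral_congr_ae (Filter.EventuallyEq.of_eq ?_)
    funext p
    rw [splitEquiv_apply]
  have h2 := (splitEquiv_measurePreserving n).setIntegral_preimage_emb
    (splitEquiv n).measurableEmbedding
    (fun z : ℝ × EuclideanSpace ℝ (Fin n) => Real.exp (-z.1) * f z.2) ((Set.Ioi (0 : ℝ)) ×ˢ Ω)
  rw [h1, h2]
  rw [Measure.volume_eq_prod, ← Measure.prod_restrict]
  exact integral_prod_mul (fun y : ℝ => Real.exp (-y)) f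

lemma vol_ball_toReal {n : ℕ} (hn : 0 < n) (x₀ : EuclideanSpace ℝ (Fin n)) (r : ℝ) (hr : 0 ≤ r) :
    (volume (Metric.ball x₀ r)).toReal = unitBallVolume n * r ^ n := by
  haveI : Nonempty (Fin n) := Fin.pos_iff_nonempty.1 hn
  rw [EuclideanSpace.volume_ball]
  have hcard : Fintype.card (Fin n) = n := Fintype.card_fin n
  rw [hcard]
  have hpos : 0 ≤ Real.sqrt Real.pi ^ n / Real.Gamma (n / 2 + 1) := by
    have := Real.Gamma_pos_of_pos (show (0:ℝ) < n/2 + 1 by positivity)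
    positivity
  rw [ENNReal.toReal_mul, ← ENNReal.ofReal_pow hr, ENNReal.toReal_ofReal (by positivity),
    ENNReal.toReal_ofReal hpos]
  have h1 : Real.sqrt Real.pi ^ n = Real.pi ^ ((n : ℝ) / 2) := by
    rw [Real.sqrt_eq_rpow, ← Real.rpow_natCast (Real.pi ^ (1/2 : ℝ)) n,
      ← Real.rpow_mul Real.pi_pos.le]
    norm_num
    rw [mul_comm, mul_one_div]
  rw [h1, unitBallVolume, add_comm (1 : ℝ)]
  ring

set_option maxHeartbeats 1000000 in
/-- With `g = 2·ω_n·τ^{n−2}(1 − 2^{−n})`, one has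
`2gϱ² ≤ ∫_{Ω×(0,∞)} |∇w_τ^ϱ|² ≤ (2g + |Ω|/4)ϱ²`; in particular, if `gϱ² > γ²` then
`(1/2)∫_{Ω×(0,∞)} |∇w_τ^ϱ|² > γ²`. -/
theorem cylinderFun_gradient_integral_bounds
    {n : ℕ} (hn : 2 ≤ n) (Ω : Set (EuclideanSpace ℝ (Fin n)))
    (hΩopen : IsOpen Ω) (hΩbdd : Bornology.IsBounded Ω)
    (x₀ : EuclideanSpace ℝ (Fin n)) (hx₀ : x₀ ∈ Ω)
    (τ : ℝ) (hτ : 0 < τ) (hball : Metric.ball x₀ τ ⊆ Ω)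
    (ϱ : ℝ) (hϱ : 0 < ϱ) :
    (2 * (2 * unitBallVolume n * τ ^ (n - 2) * (1 - 1 / 2 ^ n)) * ϱ ^ 2
      ≤ ∫ p in {p : EuclideanSpace ℝ (Fin (n + 1)) | projFirst p ∈ Ω ∧ 0 < lastCoord p},
          ‖fderiv ℝ (cylinderFun x₀ τ ϱ) p‖ ^ 2 ∂volume) ∧
    (∫ p in {p : EuclideanSpace ℝ (Fin (n + 1)) | projFirst p ∈ Ω ∧ 0 < lastCoord p},
        ‖fderiv ℝ (cylinderFun x₀ τ ϱ) p‖ ^ 2 ∂volume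
      ≤ (2 * (2 * unitBallVolume n * τ ^ (n - 2) * (1 - 1 / 2 ^ n))
          + (volume Ω).toReal / 4) * ϱ ^ 2) ∧
    (∀ γ : ℝ, 0 < γ →
      γ ^ 2 < 2 * unitBallVolume n * τ ^ (n - 2) * (1 - 1 / 2 ^ n) * ϱ ^ 2 →
      γ ^ 2 < (1 / 2) *
        ∫ p in {p : EuclideanSpace ℝ (Fin (n + 1)) | projFirst p ∈ Ω ∧ 0 < lastCoord p},
          ‖fderiv ℝ (cylinderFun x₀ τ ϱ) p‖ ^ 2 ∂volume) := by
  have hn0 : 0 < n := by omega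
  have hτne : τ ≠ 0 := hτ.ne'
  haveI : Nontrivial (EuclideanSpace ℝ (Fin n)) := by
    refine nontrivial_of_ne (EuclideanSpace.single (⟨0, hn0⟩ : Fin n) (1:ℝ)) 0 fun h => ?_
    have h1 : ‖EuclideanSpace.single (⟨0, hn0⟩ : Fin n) (1:ℝ)‖ = 1 := by
      rw [EuclideanSpace.norm_single]; norm_num
    rw [h, norm_zero] at h1
    norm_num at h1
  set G : ℝ := 2 * unitBallVolume n * τ ^ (n - 2) * (1 - 1 / 2 ^ n) with hG
  set I : ℝ := ∫ p in {p : EuclideanSpace ℝ (Fin (n + 1)) | projFirst p ∈ Ω ∧ 0 < lastCoord p},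
      ‖fderiv ℝ (cylinderFun x₀ τ ϱ) p‖ ^ 2 ∂volume with hIdef
  set c : ℝ := (2 * ϱ / τ) ^ 2 with hc
  set A : Set (EuclideanSpace ℝ (Fin n)) := Metric.ball x₀ τ \ Metric.ball x₀ (τ/2) with hA
  -- Step 1 : I = ∫_Ω hFun
  have hNnull : volume (Metric.sphere x₀ (τ/2) ∪ Metric.sphere x₀ τ) = 0 :=
    measure_union_null (Measure.addHaar_sphere volume x₀ (τ/2))
      (Measure.addHaar_sphere volume x₀ τ)
  have hZ : volume {p : EuclideanSpace ℝ (Fin (n+1)) |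
      projFirst p ∈ Metric.sphere x₀ (τ/2) ∪ Metric.sphere x₀ τ} = 0 :=
    null_preimage _ hNnull
  have hae : ∀ᵐ p ∂(volume : Measure (EuclideanSpace ℝ (Fin (n+1)))),
      ‖fderiv ℝ (cylinderFun x₀ τ ϱ) p‖ ^ 2
        = Real.exp (-(lastCoord p)) * hFun x₀ τ ϱ (projFirst p) := by
    filter_upwards [measure_eq_zero_iff_ae_notMem.1 hZ] with p hp
    simp only [Set.mem_setOf_eq, Set.mem_union, Metric.mem_sphere] at hp
    push_neg at hp
    obtain ⟨hp1, hp2⟩ := hp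
    rcases lt_trichotomy (dist (projFirst p) x₀) (τ/2) with h | h | h
    · rw [normsq_region_A x₀ τ ϱ h, mul_comm]
    · exact absurd h hp1
    · rcases lt_trichotomy (dist (projFirst p) x₀) τ with h' | h' | h'
      · rw [normsq_region_B x₀ τ ϱ hτ h h', mul_comm]
      · exact absurd h' hp2
      · rw [normsq_region_C x₀ τ ϱ hτ h', mul_comm]
  have hI2 : I = ∫ x in Ω, hFun x₀ τ ϱ x := by
    rw [hIdef, integral_congr_ae (ae_restrict_of_ae hae), setIntegral_split,
      integral_exp_neg_Ioi_zero, one_mul]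
  -- basic measure facts
  have hvolΩ : volume Ω ≠ ⊤ := hΩbdd.measure_lt_top.ne
  have hAΩ : A ⊆ Ω := fun x hx => hball hx.1
  have hmeasA : MeasurableSet A := measurableSet_ball.diff measurableSet_ball
  have hAfin : volume A < ⊤ :=
    lt_of_le_of_lt (measure_mono Set.diff_subset) measure_ball_lt_top
  have hvolA : (volume A).toReal
      = unitBallVolume n * τ ^ n - unitBallVolume n * (τ/2) ^ n := by
    rw [hA, measure_diff (Metric.ball_subset_ball (by linarith))
      measurableSet_ball.nullMeasurableSet measure_ball_lt_top.ne,
      ENNReal.toReal_sub_of_le (measure_mono (Metric.ball_subset_ball (by linarith)))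
        measure_ball_lt_top.ne,
      vol_ball_toReal hn0 x₀ τ hτ.le, vol_ball_toReal hn0 x₀ (τ/2) (by linarith)]
  have hτn : τ ^ (n-2) * τ ^ 2 = τ ^ n := by
    rw [← pow_add, Nat.sub_add_cancel hn]
  have hvolA' : (volume A).toReal
      = unitBallVolume n * (τ ^ (n-2) * τ ^ 2) * (1 - 1/2^n) := by
    rw [hvolA, hτn, div_pow]
    have h2n : (2:ℝ) ^ n ≠ 0 := by positivity
    field_simp
  have hkey : c * (volume A).toReal = 2 * G * ϱ ^ 2 := by
    rw [hvolA', hc, hG]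
    field_simp
  -- hFun facts
  have hnn : ∀ x, 0 ≤ hFun x₀ τ ϱ x := by
    intro x
    unfold hFun
    split_ifs with h1 h2 <;> positivity
  have hbd : ∀ x, hFun x₀ τ ϱ x ≤ ϱ^2/4 + c * (1 + τ^2/4) := by
    intro x
    have hcnn : (0:ℝ) ≤ c := by positivity
    unfold hFun
    split_ifs with h1 h2
    · nlinarith [sq_nonneg τ]
    · push_neg at h1
      have hd0 : 0 ≤ dist x x₀ := dist_nonneg
      have h3 : (τ - dist x x₀)^2 ≤ τ^2 := by nlinarith
      nlinarith
    · positivity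
  have hmeas : Measurable (hFun x₀ τ ϱ) := by
    unfold hFun
    refine Measurable.ite ?_ measurable_const (Measurable.ite ?_ ?_ measurable_const)
    · exact (isOpen_lt (continuous_id.dist continuous_const) continuous_const).measurableSet
    · exact (isOpen_lt (continuous_id.dist continuous_const) continuous_const).measurableSet
    · exact (continuous_const.mul ((continuous_const.add (((continuous_const.sub
        (continuous_id.dist continuous_const)).pow 2).div_const 4)))).measurable
  have hInt : IntegrableOn (hFun x₀ τ ϱ) Ω := by
    refine Measure.integrableOn_of_bounded (M := ϱ^2/4 + c * (1 + τ^2/4)) hvolΩ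
      hmeas.aestronglyMeasurable (ae_of_all _ fun x => ?_)
    rw [Real.norm_eq_abs, abs_of_nonneg (hnn x)]
    exact hbd x
  -- lower bound
  have hlow : 2 * G * ϱ ^ 2 ≤ ∫ x in Ω, hFun x₀ τ ϱ x := by
    have e1 : ∫ x in A, (c : ℝ) ∂volume = c * (volume A).toReal := by
      rw [setIntegral_const, smul_eq_mul, mul_comm, measureReal_def]
    have e2 : ∫ x in A, (c : ℝ) ∂volume ≤ ∫ x in A, hFun x₀ τ ϱ x := by
      refine setIntegral_mono_on (integrableOn_const hAfin.ne)
        (hInt.mono_set hAΩ) hmeasA fun x hx => ?_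
      have h1 : ¬ dist x x₀ < τ/2 := fun hcc => hx.2 (Metric.mem_ball.2 hcc)
      have h2 : dist x x₀ < τ := Metric.mem_ball.1 hx.1
      unfold hFun
      rw [if_neg h1, if_pos h2]
      have hcnn : (0:ℝ) ≤ c := by positivity
      nlinarith [sq_nonneg (τ - dist x x₀)]
    have e3 : ∫ x in A, hFun x₀ τ ϱ x ≤ ∫ x in Ω, hFun x₀ τ ϱ x :=
      setIntegral_mono_set hInt (ae_of_all _ hnn) (HasSubset.Subset.eventuallyLE hAΩ)
    calc 2 * G * ϱ ^ 2 = c * (volume A).toReal := hkey.symm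
      _ = ∫ x in A, (c : ℝ) ∂volume := e1.symm
      _ ≤ ∫ x in A, hFun x₀ τ ϱ x := e2
      _ ≤ ∫ x in Ω, hFun x₀ τ ϱ x := e3
  -- upper bound
  have hup : ∫ x in Ω, hFun x₀ τ ϱ x
      ≤ 2 * G * ϱ ^ 2 + (volume Ω).toReal / 4 * ϱ ^ 2 := by
    have hIndInt : Integrable (A.indicator fun _ => (c : ℝ)) volume :=
      (integrable_indicator_iff hmeasA).2 (integrableOn_const hAfin.ne)
    have hIntRHS : IntegrableOn (fun x => A.indicator (fun _ => (c : ℝ)) x + ϱ^2/4) Ω :=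
      (hIndInt.integrableOn).add (integrableOn_const hvolΩ)
    have hpt : ∀ x ∈ Ω, hFun x₀ τ ϱ x ≤ A.indicator (fun _ => (c : ℝ)) x + ϱ^2/4 := by
      intro x _
      have hcnn : (0:ℝ) ≤ c := by positivity
      have hind_nn : 0 ≤ A.indicator (fun _ => (c : ℝ)) x :=
        Set.indicator_nonneg (fun _ _ => hcnn) x
      by_cases h1 : dist x x₀ < τ/2
      · unfold hFun; rw [if_pos h1]; linarith
      · by_cases h2 : dist x x₀ < τ
        · have hxA : x ∈ A := ⟨Metric.mem_ball.2 h2, fun hcc => h1 (Metric.mem_ball.1 hcc)⟩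
          rw [Set.indicator_of_mem hxA]
          unfold hFun
          rw [if_neg h1, if_pos h2]
          push_neg at h1
          have h3 : 0 ≤ τ - dist x x₀ := by linarith
          have h4 : τ - dist x x₀ ≤ τ/2 := by linarith
          have h5 : (τ - dist x x₀)^2 ≤ (τ/2)^2 := by nlinarith
          have h6 : c * (τ/2)^2 = ϱ^2 := by
            rw [hc]; field_simp
          nlinarith
        · unfold hFun; rw [if_neg h1, if_neg h2]
          have : (0:ℝ) ≤ ϱ^2/4 := by positivity
          linarith
    have e4 : ∫ x in Ω, hFun x₀ τ ϱ x
        ≤ ∫ x in Ω, (A.indicator (fun _ => (c : ℝ)) x + ϱ^2/4) :=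
      setIntegral_mono_on hInt hIntRHS hΩopen.measurableSet hpt
    have e5 : ∫ x in Ω, (A.indicator (fun _ => (c : ℝ)) x + ϱ^2/4)
        = c * (volume A).toReal + (volume Ω).toReal * (ϱ^2/4) := by
      rw [integral_add (hIndInt.integrableOn) (integrableOn_const hvolΩ)]
      rw [setIntegral_indicator hmeasA, Set.inter_eq_self_of_subset_right hAΩ,
        setIntegral_const, setIntegral_const, smul_eq_mul, smul_eq_mul, mul_comm, measureReal_def,
        measureReal_def]
    calc ∫ x in Ω, hFun x₀ τ ϱ x ≤ _ := e4
      _ = c * (volume A).toReal + (volume Ω).toReal * (ϱ^2/4) := e5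
      _ = 2 * G * ϱ ^ 2 + (volume Ω).toReal / 4 * ϱ ^ 2 := by rw [hkey]; ring
  refine ⟨?_, ?_, ?_⟩
  · rw [hI2]
    exact hlow
  · rw [hI2]
    calc ∫ x in Ω, hFun x₀ τ ϱ x
        ≤ 2 * G * ϱ ^ 2 + (volume Ω).toReal / 4 * ϱ ^ 2 := hup
      _ = (2 * G + (volume Ω).toReal / 4) * ϱ ^ 2 := by ring
  · intro γ hγ hγ2
    have h1 : 2 * G * ϱ ^ 2 ≤ I := by rw [hI2]; exact hlow
    linarith
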